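/- Let y, ŷ ∈ ℝ and σ > 0, and let l(z) = log(p_{y,σ}(z)/p_{ŷ,σ}(z)) be the privacy loss function. Then the pushforward of the Gaussian measure N(y, σ²) under l is the Gaussian measure N(η, 2η), where η = (y − ŷ)²/(2σ²). (When y = ŷ, N(0, 0) is understood as the Dirac measure at 0.) In other words, the privacy loss random variable L = l(Z) with Z ∼ N(y, σ²) is distributed as N(η, 2η). -/

import Mathlib

open Real MeasureTheory ProbabilityTheory

/-- The Gaussian density with mean `y` and standard deviation `σ`. -/
noncomputable def gaussDensity (y σ z : ℝ) : ℝ :=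
  (1 / (σ * Real.sqrt (2 * Real.pi))) * Real.exp (-(z - y) ^ 2 / (2 * σ ^ 2))

/-- The privacy loss function of the Gaussian output-perturbation mechanism. -/
noncomputable def privacyLoss (y yh σ z : ℝ) : ℝ :=
  Real.log (gaussDensity y σ z / gaussDensity yh σ z)

lemma privacyLoss_eq (y yh σ : ℝ) (hσ : 0 < σ) (z : ℝ) :
    privacyLoss y yh σ z = ((y - yh) / σ ^ 2) * z + (yh ^ 2 - y ^ 2) / (2 * σ ^ 2) := by
  have hc : (0:ℝ) < 1 / (σ * Real.sqrt (2 * Real.pi)) := by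
    apply div_pos one_pos
    exact mul_pos hσ (Real.sqrt_pos.mpr (by positivity))
  unfold privacyLoss gaussDensity
  rw [mul_div_mul_left _ _ (ne_of_gt hc), ← Real.exp_sub, Real.log_exp]
  field_simp
  ring

/-- the privacy loss random variable of the Gaussian mechanism is
distributed as `N(η, 2η)` with `η = (y - yh)^2 / (2σ^2)`. -/
theorem privacy_loss_gaussian (y yh σ : ℝ) (hσ : 0 < σ) :
    Measure.map (privacyLoss y yh σ) (gaussianReal y (Real.toNNReal (σ ^ 2)))
      = gaussianReal ((y - yh) ^ 2 / (2 * σ ^ 2))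
          (Real.toNNReal (2 * ((y - yh) ^ 2 / (2 * σ ^ 2)))) := by
  set a : ℝ := (y - yh) / σ ^ 2 with ha
  set b : ℝ := (yh ^ 2 - y ^ 2) / (2 * σ ^ 2) with hb
  have hfun : privacyLoss y yh σ = (fun x => x + b) ∘ (fun x => a * x) := by
    funext z
    simp [Function.comp, privacyLoss_eq y yh σ hσ z, ha, hb]
  rw [hfun, ← Measure.map_map (measurable_id'.add_const b) (measurable_id'.const_mul a),
    gaussianReal_map_const_mul, gaussianReal_map_add_const]
  congr 1
  · simp only [ha, hb]
    field_simp
    ring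
  · rw [← NNReal.coe_inj]
    push_cast
    rw [Real.coe_toNNReal _ (by positivity), Real.coe_toNNReal _ (by positivity)]
    simp only [ha]
    field_simp
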